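/- A σ-maxitive measure τ on a σ-algebra 𝓑 satisfies the Radon–Nikodym property with respect to the Sugeno integral (i.e. every σ-maxitive ν on 𝓑 with ν(B) ≤ τ(B) for all B ∈ 𝓑 admits a 𝓑-measurable c : E → [0,∞] with ν(B) = sup_{t≥0} min(t, τ(B ∩ {c > t})) for all B ∈ 𝓑) if and only if τ is σ-principal. -/

import Mathlib

open scoped ENNReal
open Set Filter MeasureTheory

variable {E : Type*}

/-- `f : E → [0,∞]` is `𝓑`-measurable: `{f > t}` is measurable for every `t`. -/
def Premeasurable [MeasurableSpace E] (f : E → ℝ≥0∞) : Prop :=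
  ∀ t : ℝ≥0∞, MeasurableSet {x | t < f x}

/-- A maxitive measure on the σ-algebra of measurable subsets of `E`. -/
def Maxitive [MeasurableSpace E] (ν : Set E → ℝ≥0∞) : Prop :=
  ν ∅ = 0 ∧ ∀ A B : Set E, MeasurableSet A → MeasurableSet B →
    ν (A ∪ B) = max (ν A) (ν B)

/-- A σ-maxitive measure: a maxitive measure commuting with countable nondecreasing unions. -/
def SigmaMaxitive [MeasurableSpace E] (ν : Set E → ℝ≥0∞) : Prop :=
  Maxitive ν ∧ ∀ B : ℕ → Set E, (∀ n, MeasurableSet (B n)) → Monotone B →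
    ν (⋃ n, B n) = ⨆ n, ν (B n)

/-- `N` is `τ`-negligible: it is contained in a measurable set of `τ`-measure zero. -/
def Negligible [MeasurableSpace E] (τ : Set E → ℝ≥0∞) (N : Set E) : Prop :=
  ∃ B : Set E, MeasurableSet B ∧ N ⊆ B ∧ τ B = 0

/-- The `τ`-essential supremum of `f` over `B`: `inf { t > 0 : B ∩ {f > t} is τ-negligible }`. -/
noncomputable def essSupOn [MeasurableSpace E] (τ : Set E → ℝ≥0∞) (f : E → ℝ≥0∞)
    (B : Set E) : ℝ≥0∞ :=
  sInf {t : ℝ≥0∞ | 0 < t ∧ Negligible τ (B ∩ {x | t < f x})}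

/-- `ν ≪ τ`: absolute continuity. -/
def AbsCont [MeasurableSpace E] (ν τ : Set E → ℝ≥0∞) : Prop :=
  ∀ B : Set E, MeasurableSet B → τ B = 0 → ν B = 0

/-- `ν ⋘ τ`: strong absolute continuity, i.e. `ν` has a measurable relative density
with respect to `τ`. -/
def StrongAbsCont [MeasurableSpace E] (ν τ : Set E → ℝ≥0∞) : Prop :=
  ∃ f : E → ℝ≥0∞, Premeasurable f ∧ ∀ B : Set E, MeasurableSet B → ν B = essSupOn τ f B

/-- `c` is a cardinal density of `ν`: `ν B = sup_{x ∈ B} c x` for every measurable `B`. -/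
def IsCardinalDensity [MeasurableSpace E] (ν : Set E → ℝ≥0∞) (c : E → ℝ≥0∞) : Prop :=
  ∀ B : Set E, MeasurableSet B → ν B = ⨆ x ∈ B, c x

/-- `τ` is essential: there exists a σ-finite σ-additive measure `m` with the same
null measurable sets. -/
def Essential [MeasurableSpace E] (τ : Set E → ℝ≥0∞) : Prop :=
  ∃ m : Measure E, SigmaFinite m ∧ ∀ B : Set E, MeasurableSet B → (0 < τ B ↔ 0 < m B)

/-- A σ-ideal of the σ-algebra of measurable sets. -/
def SigmaIdeal [MeasurableSpace E] (I : Set (Set E)) : Prop :=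
  I.Nonempty ∧ (∀ S ∈ I, MeasurableSet S) ∧
  (∀ f : ℕ → Set E, (∀ n, f n ∈ I) → (⋃ n, f n) ∈ I) ∧
  (∀ B S : Set E, MeasurableSet B → S ∈ I → B ⊆ S → B ∈ I)

/-- `τ` is σ-principal: every σ-ideal has a greatest element modulo `τ`-negligible sets. -/
def SigmaPrincipal [MeasurableSpace E] (τ : Set E → ℝ≥0∞) : Prop :=
  ∀ I : Set (Set E), SigmaIdeal I → ∃ L ∈ I, ∀ S ∈ I, Negligible τ (S \ L)

/-- A pseudo-multiplication on `[0,∞]`. -/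
structure PseudoMul where
  op : ℝ≥0∞ → ℝ≥0∞ → ℝ≥0∞
  assoc : ∀ a b c, op (op a b) c = op a (op b c)
  contOn : ContinuousOn (fun q : ℝ≥0∞ × ℝ≥0∞ => op q.1 q.2) (Set.Ioo 0 ⊤ ×ˢ Set.univ)
  contLeft : ∀ t, ContinuousOn (fun s => op s t) (Set.Ioi 0)
  monoLeft : ∀ t, Monotone fun s => op s t
  monoRight : ∀ s, Monotone (op s)
  one : ℝ≥0∞
  one_op : ∀ t, op one t = t
  eq_zero : ∀ s t, op s t = 0 → s = 0 ∨ t = 0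
  zero_op : ∀ t, op 0 t = 0
  op_zero : ∀ t, op t 0 = 0

/-- `t` is `⊙`-finite: `inf_{s > 0} s ⊙ t = 0`. -/
def OdotFinite (p : PseudoMul) (t : ℝ≥0∞) : Prop :=
  (⨅ s ∈ Set.Ioi (0 : ℝ≥0∞), p.op s t) = 0

/-- The idempotent `⊙`-integral `∫_B f ⊙ dτ = sup_{t ∈ [0,∞)} t ⊙ τ (B ∩ {f > t})`. -/
noncomputable def iInt [MeasurableSpace E] (p : PseudoMul) (τ : Set E → ℝ≥0∞)
    (f : E → ℝ≥0∞) (B : Set E) : ℝ≥0∞ :=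
  ⨆ t ∈ Set.Iio (⊤ : ℝ≥0∞), p.op t (τ (B ∩ {x | t < f x}))

/-- `ν ≪_⊙ τ`: `ν B ≤ ∞ ⊙ τ B` for every measurable `B`. -/
def OdotAbsCont [MeasurableSpace E] (p : PseudoMul) (ν τ : Set E → ℝ≥0∞) : Prop :=
  ∀ B : Set E, MeasurableSet B → ν B ≤ p.op ⊤ (τ B)

/-- `ν` is semi-`⊙`-finite. -/
def SemiOdotFinite [MeasurableSpace E] (p : PseudoMul) (ν : Set E → ℝ≥0∞) : Prop :=
  ∀ B : Set E, MeasurableSet B →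
    ν B = ⨆ A ∈ {A : Set E | MeasurableSet A ∧ A ⊆ B ∧ OdotFinite p (ν A)}, ν A

/-- `τ` is σ-`⊙`-finite. -/
def SigmaOdotFinite [MeasurableSpace E] (p : PseudoMul) (τ : Set E → ℝ≥0∞) : Prop :=
  ∃ B : ℕ → Set E, (∀ n, MeasurableSet (B n)) ∧ (⋃ n, B n) = Set.univ ∧
    ∀ n, OdotFinite p (τ (B n))

/-- Continuity from below. -/
def ContFromBelow [MeasurableSpace E] (ν : Set E → ℝ≥0∞) : Prop :=
  ∀ B : ℕ → Set E, (∀ n, MeasurableSet (B n)) → Monotone B →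
    Tendsto (fun n => ν (B n)) atTop (nhds (ν (⋃ n, B n)))

/-- Continuity from above (no finiteness assumption). -/
def ContFromAbove [MeasurableSpace E] (ν : Set E → ℝ≥0∞) : Prop :=
  ∀ B : ℕ → Set E, (∀ n, MeasurableSet (B n)) → Antitone B →
    Tendsto (fun n => ν (B n)) atTop (nhds (ν (⋂ n, B n)))

/-- An optimal measure: a maxitive measure continuous from below and from above. -/
def Optimal [MeasurableSpace E] (ν : Set E → ℝ≥0∞) : Prop :=
  Maxitive ν ∧ ContFromBelow ν ∧ ContFromAbove ν


section RNAux

variable [MeasurableSpace E] {ν : Set E → ℝ≥0∞}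

lemma Maxitive.mono' (hν : Maxitive ν) {A B : Set E}
    (hA : MeasurableSet A) (hB : MeasurableSet B) (hAB : A ⊆ B) : ν A ≤ ν B := by
  have h := hν.2 A B hA hB
  rw [Set.union_eq_self_of_subset_left hAB] at h
  rw [h]
  exact le_max_left _ _

lemma SigmaMaxitive.iUnion_le' (hν : SigmaMaxitive ν)
    (f : ℕ → Set E) (hm : ∀ n, MeasurableSet (f n)) {a : ℝ≥0∞} (h : ∀ n, ν (f n) ≤ a) :
    ν (⋃ n, f n) ≤ a := by
  have hmacc : ∀ n, MeasurableSet (Set.accumulate f n) := fun n =>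
    MeasurableSet.biUnion (Set.to_countable _) fun k _ => hm k
  have hbd : ∀ n, ν (Set.accumulate f n) ≤ a := by
    intro n
    induction n with
    | zero =>
      have : Set.accumulate f 0 = f 0 := by
        simp [Set.accumulate_def, Nat.le_zero]
      rw [this]; exact h 0
    | succ n ih =>
      have hacc : Set.accumulate f (n + 1) = Set.accumulate f n ∪ f (n + 1) := by
        simp only [Set.accumulate_def]
        exact Set.biUnion_le_succ f n
      rw [hacc, hν.1.2 _ _ (hmacc n) (hm (n + 1))]
      exact max_le ih (h (n + 1))
  rw [← Set.iUnion_accumulate, hν.2 _ hmacc Set.monotone_accumulate]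
  exact iSup_le hbd

lemma SigmaMaxitive.iUnion_rat_le (hν : SigmaMaxitive ν)
    (f : ℚ → Set E) (hm : ∀ q, MeasurableSet (f q)) {a : ℝ≥0∞} (h : ∀ q, ν (f q) ≤ a) :
    ν (⋃ q, f q) ≤ a := by
  rw [← (Denumerable.eqv ℚ).symm.surjective.iUnion_comp f]
  exact hν.iUnion_le' _ (fun n => hm _) fun n => h _

end RNAux

/-- A σ-maxitive measure `τ` has the Radon–Nikodym property with respect to the Sugeno
integral iff it is σ-principal. -/
theorem sugeno_rnProperty_iff [MeasurableSpace E] (τ : Set E → ℝ≥0∞)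
    (hτ : SigmaMaxitive τ) :
    (∀ ν : Set E → ℝ≥0∞, SigmaMaxitive ν →
        (∀ B : Set E, MeasurableSet B → ν B ≤ τ B) →
        ∃ c : E → ℝ≥0∞, Premeasurable c ∧ ∀ B : Set E, MeasurableSet B →
          ν B = ⨆ t ∈ Set.Iio (⊤ : ℝ≥0∞), min t (τ (B ∩ {x | t < c x}))) ↔
    SigmaPrincipal τ := by
  constructor
  · -- RNP implies sigma-principal
    intro H I hI
    obtain ⟨hne, hImeas, hIunion, hIdown⟩ := hI
    obtain ⟨S₀, hS₀⟩ := hne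
    have hτmono : ∀ {A B : Set E}, MeasurableSet A → MeasurableSet B → A ⊆ B → τ A ≤ τ B :=
      fun hA hB hAB => hτ.1.mono' hA hB hAB
    -- the inf-distance measure
    set ν : Set E → ℝ≥0∞ := fun B => ⨅ S ∈ I, τ (B \ S) with hνdef
    have hνmono : ∀ {A B : Set E}, MeasurableSet A → MeasurableSet B → A ⊆ B →
        ν A ≤ ν B := by
      intro A B hA hB hAB
      refine le_iInf₂ fun S hS => (iInf₂_le S hS).trans ?_
      exact hτmono (hA.diff (hImeas S hS)) (hB.diff (hImeas S hS)) (Set.diff_subset_diff_left hAB)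
    have hν0 : ∀ S ∈ I, ν S = 0 := by
      intro S hS
      refine le_antisymm ((iInf₂_le S hS).trans ?_) zero_le
      simp [hτ.1.1]
    have hνσ : SigmaMaxitive ν := by
      refine ⟨⟨?_, ?_⟩, ?_⟩
      · refine le_antisymm ((iInf₂_le S₀ hS₀).trans ?_) zero_le
        simp [hτ.1.1]
      · intro A B hA hB
        refine le_antisymm ?_ (max_le (hνmono hA (hA.union hB) Set.subset_union_left)
          (hνmono hB (hA.union hB) Set.subset_union_right))
        by_contra hcon
        push_neg at hcon
        have hA' : ν A < ν (A ∪ B) := lt_of_le_of_lt (le_max_left _ (ν B)) hcon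
        have hB' : ν B < ν (A ∪ B) := lt_of_le_of_lt (le_max_right (ν A) _) hcon
        have hA'' : ⨅ S ∈ I, τ (A \ S) < ν (A ∪ B) := hA'
        have hB'' : ⨅ S ∈ I, τ (B \ S) < ν (A ∪ B) := hB'
        simp only [iInf_lt_iff] at hA'' hB''
        obtain ⟨S₁, hS₁, hv₁⟩ := hA''
        obtain ⟨S₂, hS₂, hv₂⟩ := hB''
        have hS₁₂ : S₁ ∪ S₂ ∈ I := by
          have h12 := hIunion (fun n => if n = 0 then S₁ else S₂) (by
            intro n; by_cases hn : n = 0 <;> simp [hn, hS₁, hS₂])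
          have : (⋃ n, if n = 0 then S₁ else S₂) = S₁ ∪ S₂ := by
            ext x
            constructor
            · rintro ⟨s, ⟨n, rfl⟩, hx⟩
              by_cases hn : n = 0
              · rw [hn] at hx; simp only [if_pos rfl] at hx; exact Or.inl hx
              · simp only [if_neg hn] at hx; exact Or.inr hx
            · rintro (hx | hx)
              · exact ⟨S₁, ⟨0, by simp⟩, hx⟩
              · exact ⟨S₂, ⟨1, by simp⟩, hx⟩
          rwa [this] at h12
        have hmS₁₂ : MeasurableSet (S₁ ∪ S₂) := hImeas _ hS₁₂
        have hkey : ν (A ∪ B) ≤ max (τ (A \ S₁)) (τ (B \ S₂)) := by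
          refine (iInf₂_le (S₁ ∪ S₂) hS₁₂).trans ?_
          rw [Set.union_diff_distrib, hτ.1.2 _ _ (hA.diff hmS₁₂) (hB.diff hmS₁₂)]
          refine max_le_max ?_ ?_
          · exact hτmono (hA.diff hmS₁₂) (hA.diff (hImeas _ hS₁))
              (Set.diff_subset_diff_right Set.subset_union_left)
          · exact hτmono (hB.diff hmS₁₂) (hB.diff (hImeas _ hS₂))
              (Set.diff_subset_diff_right Set.subset_union_right)
        exact absurd (hkey.trans_lt (max_lt hv₁ hv₂)) (lt_irrefl _)
      · intro B hBmeas hBmono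
        have hUm : MeasurableSet (⋃ n, B n) := MeasurableSet.iUnion hBmeas
        refine le_antisymm ?_ (iSup_le fun n =>
          hνmono (hBmeas n) hUm (Set.subset_iUnion B n))
        refine le_of_forall_gt_imp_ge_of_dense fun w hw => ?_
        have hex : ∀ n, ∃ S ∈ I, τ (B n \ S) < w := by
          intro n
          have h1 : ν (B n) < w := lt_of_le_of_lt (le_iSup (fun n => ν (B n)) n) hw
          have h2 : ⨅ S ∈ I, τ (B n \ S) < w := h1
          simpa only [iInf_lt_iff, exists_prop] using h2
        choose S hSmem hSlt using hex
        have hSU : (⋃ n, S n) ∈ I := hIunion S hSmem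
        have hSUm : MeasurableSet (⋃ n, S n) := hImeas _ hSU
        refine (iInf₂_le _ hSU).trans ?_
        rw [Set.iUnion_diff, hτ.2 _ (fun n => (hBmeas n).diff hSUm)
          (fun n m hnm => Set.diff_subset_diff_left (hBmono hnm))]
        refine iSup_le fun n => ?_
        refine le_of_lt (lt_of_le_of_lt ?_ (hSlt n))
        exact hτmono ((hBmeas n).diff hSUm) ((hBmeas n).diff (hImeas _ (hSmem n)))
          (Set.diff_subset_diff_right (Set.subset_iUnion S n))
    have hνle : ∀ B : Set E, MeasurableSet B → ν B ≤ τ B := by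
      intro B hB
      exact (iInf₂_le S₀ hS₀).trans (hτmono (hB.diff (hImeas _ hS₀)) hB Set.diff_subset)
    obtain ⟨c, hc, hrep⟩ := H ν hνσ hνle
    -- on ideal elements, {c > t} has measure 0
    have hSnull : ∀ S ∈ I, ∀ t : ℝ≥0∞, 0 < t → t < ⊤ → τ (S ∩ {x | t < c x}) = 0 := by
      intro S hS t ht htop
      have h0 : ν S = 0 := hν0 S hS
      rw [hrep S (hImeas S hS)] at h0
      have hle' : min t (τ (S ∩ {x | t < c x})) ≤ 0 := by
        rw [← h0]
        exact le_iSup₂_of_le t htop le_rfl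
      rcases min_le_iff.1 hle' with h | h
      · exact absurd (lt_of_lt_of_le ht h) (lt_irrefl _)
      · exact le_antisymm h zero_le
    have hSc : ∀ S ∈ I, τ (S ∩ {x | 0 < c x}) = 0 := by
      intro S hS
      have hU : S ∩ {x | 0 < c x} = ⋃ n : ℕ, S ∩ {x | ((n : ℝ≥0∞) + 1)⁻¹ < c x} := by
        ext x
        simp only [Set.mem_inter_iff, Set.mem_iUnion, Set.mem_setOf_eq]
        constructor
        · rintro ⟨hxS, hx⟩
          obtain ⟨n, hn⟩ := ENNReal.exists_inv_nat_lt (ne_of_gt hx)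
          refine ⟨n, hxS, lt_of_le_of_lt ?_ hn⟩
          exact ENNReal.inv_le_inv.2 (le_add_of_nonneg_right zero_le)
        · rintro ⟨n, hxS, hx⟩
          exact ⟨hxS, lt_of_le_of_lt zero_le hx⟩
      have hmono2 : Monotone fun n : ℕ => S ∩ {x | ((n : ℝ≥0∞) + 1)⁻¹ < c x} := by
        intro n m hnm
        refine Set.inter_subset_inter_right _ fun x hx => ?_
        simp only [Set.mem_setOf_eq] at hx ⊢
        refine lt_of_le_of_lt ?_ hx
        exact ENNReal.inv_le_inv.2 (add_le_add_left (by exact_mod_cast hnm) 1)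
      rw [hU, hτ.2 _ (fun n => (hImeas S hS).inter (hc _)) hmono2]
      refine le_antisymm (iSup_le fun n => ?_) zero_le
      rw [hSnull S hS _ (ENNReal.inv_pos.2 (by simp)) (ENNReal.inv_lt_top.2 (by simp))]
    -- the zero set of c
    set Z : Set E := {x | 0 < c x}ᶜ with hZdef
    have hZmeas : MeasurableSet Z := (hc 0).compl
    have hνZ : ν Z = 0 := by
      rw [hrep Z hZmeas]
      refine le_antisymm (iSup₂_le fun t _ => ?_) zero_le
      have hempty : Z ∩ {x | t < c x} = ∅ := by
        ext x
        simp only [Set.mem_inter_iff, Set.mem_empty_iff_false, iff_false, not_and, hZdef,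
          Set.mem_compl_iff, Set.mem_setOf_eq]
        intro hx
        rw [not_lt, le_zero_iff] at hx
        rw [hx]
        exact not_lt.2 zero_le
      rw [hempty, hτ.1.1]
      simp
    have hex : ∀ n : ℕ, ∃ S ∈ I, τ (Z \ S) < ((n : ℝ≥0∞) + 1)⁻¹ := by
      intro n
      have h1 : (⨅ S ∈ I, τ (Z \ S)) < ((n : ℝ≥0∞) + 1)⁻¹ := by
        rw [show (⨅ S ∈ I, τ (Z \ S)) = ν Z from rfl, hνZ]
        exact ENNReal.inv_pos.2 (by simp)
      simpa only [iInf_lt_iff, exists_prop] using h1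
    choose f hfI hflt using hex
    set L : Set E := ⋃ n, f n with hLdef
    have hLI : L ∈ I := hIunion f hfI
    have hLmeas : MeasurableSet L := hImeas _ hLI
    have hZL : τ (Z \ L) = 0 := by
      by_contra h0
      obtain ⟨n, hn⟩ := ENNReal.exists_inv_nat_lt h0
      have h2 : τ (Z \ L) < ((n : ℝ≥0∞) + 1)⁻¹ := by
        refine lt_of_le_of_lt ?_ (hflt n)
        exact hτmono (hZmeas.diff hLmeas) (hZmeas.diff (hImeas _ (hfI n)))
          (Set.diff_subset_diff_right (Set.subset_iUnion f n))
      have h3 : ((n : ℝ≥0∞) + 1)⁻¹ ≤ (n : ℝ≥0∞)⁻¹ :=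
        ENNReal.inv_le_inv.2 (le_add_of_nonneg_right zero_le)
      exact absurd (hn.trans (h2.trans_le h3)) (lt_irrefl _)
    refine ⟨L, hLI, fun S hS => ?_⟩
    refine ⟨(S ∩ {x | 0 < c x}) ∪ (Z \ L), ((hImeas S hS).inter (hc 0)).union
      (hZmeas.diff hLmeas), ?_, ?_⟩
    · rintro x ⟨hxS, hxL⟩
      by_cases hx : 0 < c x
      · exact Or.inl ⟨hxS, hx⟩
      · exact Or.inr ⟨hx, hxL⟩
    · rw [hτ.1.2 _ _ ((hImeas S hS).inter (hc 0)) (hZmeas.diff hLmeas),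
        hSc S hS, hZL]
      simp
  · -- sigma-principal implies RNP
    intro hp ν hν hle
    set I : ℚ → Set (Set E) := fun q => {B | MeasurableSet B ∧ ν B ≤ ENNReal.ofReal q}
      with hIdef
    have hI : ∀ q, SigmaIdeal (I q) := by
      intro q
      refine ⟨⟨∅, MeasurableSet.empty, by rw [hν.1.1]; exact zero_le⟩,
        fun S hS => hS.1, ?_, ?_⟩
      · intro f hf
        exact ⟨MeasurableSet.iUnion fun n => (hf n).1,
          hν.iUnion_le' f (fun n => (hf n).1) fun n => (hf n).2⟩
      · intro B S hB hS hBS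
        exact ⟨hB, (hν.1.mono' hB hS.1 hBS).trans hS.2⟩
    choose L hLmem hLmax using fun q => hp (I q) (hI q)
    have hLmeas : ∀ q, MeasurableSet (L q) := fun q => (hLmem q).1
    have hLν : ∀ q, ν (L q) ≤ ENNReal.ofReal q := fun q => (hLmem q).2
    set c : E → ℝ≥0∞ := fun x => ⨅ (q : ℚ) (_ : 0 < q ∧ x ∈ L q), ENNReal.ofReal q
      with hcdef
    have P1 : ∀ (q : ℚ) (x : E), 0 < q → x ∈ L q → c x ≤ ENNReal.ofReal q :=
      fun q x hq hx => iInf₂_le q ⟨hq, hx⟩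
    have P2 : ∀ (x : E) (b : ℝ≥0∞), c x < b →
        ∃ q : ℚ, 0 < q ∧ x ∈ L q ∧ ENNReal.ofReal q < b := by
      intro x b h
      have h' : (⨅ (q : ℚ) (_ : 0 < q ∧ x ∈ L q), ENNReal.ofReal (q : ℝ)) < b := h
      simp only [iInf_lt_iff] at h'
      obtain ⟨q, ⟨hq1, hq2⟩, hq3⟩ := h'
      exact ⟨q, hq1, hq2, hq3⟩
    have hset : ∀ t : ℝ≥0∞, {x | t < c x} =
        ⋃ (r : ℚ) (_ : t < ENNReal.ofReal r),
          ⋂ (p : ℚ) (_ : 0 < p ∧ ENNReal.ofReal (p : ℝ) < ENNReal.ofReal (r : ℝ)), (L p)ᶜ := by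
      intro t
      ext x
      simp only [Set.mem_setOf_eq, Set.mem_iUnion, Set.mem_iInter, Set.mem_compl_iff,
        exists_prop]
      constructor
      · intro hx
        obtain ⟨r, hr0, hr1, hr2⟩ := ENNReal.lt_iff_exists_rat_btwn.1 hx
        refine ⟨r, hr1, fun p hp hxp => ?_⟩
        have h1 := P1 p x hp.1 hxp
        exact absurd ((h1.trans_lt hp.2).trans hr2) (lt_irrefl _)
      · rintro ⟨r, hr, hx⟩
        refine lt_of_lt_of_le hr (le_iInf₂ fun p hp => ?_)
        by_contra hcon
        push_neg at hcon
        exact (hx p ⟨hp.1, hcon⟩) hp.2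
    have hcmeas : Premeasurable c := by
      intro t
      rw [hset t]
      refine MeasurableSet.iUnion fun r => MeasurableSet.iUnion fun _ => ?_
      exact MeasurableSet.iInter fun p => MeasurableSet.iInter fun _ => (hLmeas p).compl
    refine ⟨c, hcmeas, fun B hB => ?_⟩
    refine le_antisymm ?_ (iSup₂_le fun t htop => ?_)
    · -- ν B ≤ sup
      refine le_of_forall_lt fun w hw => ?_
      obtain ⟨q, hq0, hq1, hq2⟩ := ENNReal.lt_iff_exists_rat_btwn.1 hw
      set t : ℝ≥0∞ := ENNReal.ofReal q with htdef
      have ht1 : w < t := hq1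
      have ht2 : t < ν B := hq2
      have htop : t < ⊤ := ENNReal.ofReal_lt_top
      have hcompl : MeasurableSet {x | t < c x}ᶜ := (hcmeas t).compl
      have ha : ν (B ∩ {x | t < c x}ᶜ) ≤ t := by
        have claim2 : ∀ r : ℚ, t < ENNReal.ofReal r →
            ν (B ∩ {x | t < c x}ᶜ) ≤ ENNReal.ofReal r := by
          intro r hr
          have hMmeas : ∀ p : ℚ, MeasurableSet
              (if 0 < p ∧ ENNReal.ofReal (p : ℝ) < ENNReal.ofReal (r : ℝ) then L p
                else (∅ : Set E)) := by
            intro p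
            split
            · exact hLmeas p
            · exact MeasurableSet.empty
          have hsub : B ∩ {x | t < c x}ᶜ ⊆ ⋃ p : ℚ,
              (if 0 < p ∧ ENNReal.ofReal (p : ℝ) < ENNReal.ofReal (r : ℝ) then L p else ∅) := by
            rintro x ⟨hxB, hxc⟩
            have hcx : c x < ENNReal.ofReal r := lt_of_le_of_lt (not_lt.1 hxc) hr
            obtain ⟨p, hp1, hp2, hp3⟩ := P2 x _ hcx
            exact Set.mem_iUnion.2 ⟨p, by rw [if_pos ⟨hp1, hp3⟩]; exact hp2⟩
          refine (hν.1.mono' (hB.inter hcompl) (MeasurableSet.iUnion hMmeas) hsub).trans ?_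
          refine hν.iUnion_rat_le _ hMmeas fun p => ?_
          split
          · next hcond => exact (hLν p).trans (le_of_lt hcond.2)
          · rw [hν.1.1]; exact zero_le
        refine le_of_forall_gt_imp_ge_of_dense fun w' hw' => ?_
        obtain ⟨r, _, hr1, hr2⟩ := ENNReal.lt_iff_exists_rat_btwn.1 hw'
        exact (claim2 r hr1).trans (le_of_lt hr2)
      have hunion : (B ∩ {x | t < c x}ᶜ) ∪ (B ∩ {x | t < c x}) = B := by
        rw [Set.union_comm, Set.inter_union_compl]
      have hmax := hν.1.2 _ _ (hB.inter hcompl) (hB.inter (hcmeas t))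
      rw [hunion] at hmax
      have hb : ν (B ∩ {x | t < c x}) = ν B := by
        rcases max_choice (ν (B ∩ {x | t < c x}ᶜ)) (ν (B ∩ {x | t < c x})) with h | h
        · exfalso
          rw [h] at hmax
          exact absurd ((hmax.le.trans ha).trans_lt ht2) (lt_irrefl _)
        · rw [h] at hmax
          exact hmax.symm
      have hτb : t ≤ τ (B ∩ {x | t < c x}) := by
        refine le_trans (le_of_lt ht2) ?_
        rw [← hb]
        exact hle _ (hB.inter (hcmeas t))
      have hmin : min t (τ (B ∩ {x | t < c x})) = t := min_eq_left hτb
      calc w < t := ht1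
        _ ≤ _ := by rw [← hmin]; exact le_iSup₂_of_le t htop le_rfl
    · -- each term ≤ ν B
      rcases le_or_gt t (ν B) with h | h
      · exact (min_le_left _ _).trans h
      · obtain ⟨q, hq0, hq1, hq2⟩ := ENNReal.lt_iff_exists_rat_btwn.1 h
        have hq0' : 0 < q := by
          have h1 : (0 : ℝ) < (q : ℝ) :=
            ENNReal.ofReal_pos.1 (lt_of_le_of_lt zero_le hq1)
          exact_mod_cast h1
        have hBI : B ∈ I q := ⟨hB, le_of_lt hq1⟩
        obtain ⟨N, hNmeas, hNsub, hN0⟩ := hLmax q B hBI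
        have hsub : B ∩ {x | t < c x} ⊆ N := by
          rintro x ⟨hxB, hxc⟩
          refine hNsub ⟨hxB, fun hxL => ?_⟩
          have h1 := P1 q x hq0' hxL
          exact absurd ((h1.trans_lt hq2).trans hxc) (lt_irrefl _)
        have hτ0 : τ (B ∩ {x | t < c x}) = 0 :=
          le_antisymm (le_trans (hτ.1.mono' (hB.inter (hcmeas t)) hNmeas hsub) hN0.le)
            zero_le
        rw [hτ0]
        simp
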